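/- The transformations s0 and s2 of the A5^(2) system satisfy the braid relation (s0 s2)³ = id, where s0 : (q1,p1,q2,p2;α) ↦ (q1+α0/p1, p1, q2, p2; -α0, α1, α2+α0, α3) and s2 : (q1,p1,q2,p2;α) ↦ (q1, p1 - α2 q2/(q1 q2+T), q2, p2 - α2 q1/(q1 q2+T); α0+α2, α1+α2, -α2, α3+2α2). -/

import Mathlib

/-- State space: variables (q1,p1,q2,p2) and parameters (α0,α1,α2,α3). -/
abbrev S := ℂ × ℂ × ℂ × ℂ × ℂ × ℂ × ℂ × ℂ

/-- Bäcklund transformation s0. -/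
noncomputable def s0 : S → S :=
  fun (q1, p1, q2, p2, a0, a1, a2, a3) =>
    (q1 + a0/p1, p1, q2, p2, -a0, a1, a2 + a0, a3)

/-- Bäcklund transformation s1. -/
noncomputable def s1 : S → S :=
  fun (q1, p1, q2, p2, a0, a1, a2, a3) =>
    (q1, p1, q2 + a1/p2, p2, a0, -a1, a2 + a1, a3)

/-- Bäcklund transformation s2 (T a fixed constant). -/
noncomputable def s2 (T : ℂ) : S → S :=
  fun (q1, p1, q2, p2, a0, a1, a2, a3) =>
    (q1, p1 - a2*q2/(q1*q2 + T), q2, p2 - a2*q1/(q1*q2 + T),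
      a0 + a2, a1 + a2, -a2, a3 + 2*a2)

/-- Bäcklund transformation s3. -/
noncomputable def s3 : S → S :=
  fun (q1, p1, q2, p2, a0, a1, a2, a3) =>
    (q1 + a3/(p1 + p2 - 1), p1, q2 + a3/(p1 + p2 - 1), p2,
      a0, a1, a2 + a3, -a3)

/-- Diagram automorphism π. -/
def pitr : S → S :=
  fun (q1, p1, q2, p2, a0, a1, a2, a3) =>
    (q2, p2, q1, p1, a1, a0, a2, a3)

/-- s0 is defined at x (denominator p1 is nonzero). -/
def okS0 (x : S) : Prop := x.2.1 ≠ 0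

/-- s1 is defined at x (denominator p2 is nonzero). -/
def okS1 (x : S) : Prop := x.2.2.2.1 ≠ 0

/-- s2 is defined at x (denominator q1*q2 + T is nonzero). -/
def okS2 (T : ℂ) (x : S) : Prop := x.1 * x.2.2.1 + T ≠ 0

/-- s3 is defined at x (denominator p1 + p2 - 1 is nonzero). -/
def okS3 (x : S) : Prop := x.2.1 + x.2.2.2.1 ≠ 1

/-- The braid relation (s0 s2)³ = id, wherever all intermediate expressions are defined. -/
theorem stmt_8 (T : ℂ) (hT : T ≠ 0) (x : S)
    (h1 : okS2 T x) (h2 : okS0 (s2 T x)) (h3 : okS2 T (s0 (s2 T x)))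
    (h4 : okS0 (s2 T (s0 (s2 T x)))) (h5 : okS2 T (s0 (s2 T (s0 (s2 T x)))))
    (h6 : okS0 (s2 T (s0 (s2 T (s0 (s2 T x)))))) :
    s0 (s2 T (s0 (s2 T (s0 (s2 T x))))) = x := by
  obtain ⟨q1, p1, q2, p2, a0, a1, a2, a3⟩ := x
  have hD : q1*q2 + T ≠ 0 := h1
  -- step 1
  have e1 : s2 T (q1, p1, q2, p2, a0, a1, a2, a3)
      = (q1, (p1*(q1*q2+T) - a2*q2)/(q1*q2+T), q2, (p2*(q1*q2+T) - a2*q1)/(q1*q2+T),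
          a0+a2, a1+a2, -a2, a3+2*a2) := by
    simp only [s2, Prod.mk.injEq]
    and_intros <;> first | rfl | ring1 | (field_simp [hD]; first | done | ring1) | trivial | (have _ : q2*q1+T ≠ 0 := fun h => hD (by linear_combination h); (try have _ : (q1*q2+T)*p1 - a2*q2 ≠ 0 := fun h => hA (by linear_combination h)); (try have _ : (q1*q2+T)*p1 - q2*a2 ≠ 0 := fun h => hA (by linear_combination h)); (try have _ : p1*(q1*q2+T) - q2*a2 ≠ 0 := fun h => hA (by linear_combination h)); (try have _ : p1*(q2*q1+T) - a2*q2 ≠ 0 := fun h => hA (by linear_combination h)); (try have _ : p1*(q1*q2+T) + q2*a0 ≠ 0 := fun h => hB (by linear_combination h)); (try have _ : (q1*q2+T)*p1 + q2*a0 ≠ 0 := fun h => hB (by linear_combination h)); field_simp; first | done | ring1)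
  rw [e1] at h2 h3 h4 h5 h6 ⊢
  have hA : p1*(q1*q2+T) - a2*q2 ≠ 0 := by
    intro h
    exact h2 (by simp only [okS0, h, zero_div])
  -- step 2
  have e2 : s0 (q1, (p1*(q1*q2+T) - a2*q2)/(q1*q2+T), q2, (p2*(q1*q2+T) - a2*q1)/(q1*q2+T),
          a0+a2, a1+a2, -a2, a3+2*a2)
      = ((q1*(p1*(q1*q2+T) - a2*q2) + (a0+a2)*(q1*q2+T))/(p1*(q1*q2+T) - a2*q2),
          (p1*(q1*q2+T) - a2*q2)/(q1*q2+T), q2, (p2*(q1*q2+T) - a2*q1)/(q1*q2+T),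
          -(a0+a2), a1+a2, a0, a3+2*a2) := by
    simp only [s0, div_div_eq_mul_div, Prod.mk.injEq]
    and_intros <;> first | rfl | ring1 | (field_simp [hD, hA]; first | done | ring1) | trivial | (have _ : q2*q1+T ≠ 0 := fun h => hD (by linear_combination h); (try have _ : (q1*q2+T)*p1 - a2*q2 ≠ 0 := fun h => hA (by linear_combination h)); (try have _ : (q1*q2+T)*p1 - q2*a2 ≠ 0 := fun h => hA (by linear_combination h)); (try have _ : p1*(q1*q2+T) - q2*a2 ≠ 0 := fun h => hA (by linear_combination h)); (try have _ : p1*(q2*q1+T) - a2*q2 ≠ 0 := fun h => hA (by linear_combination h)); (try have _ : p1*(q1*q2+T) + q2*a0 ≠ 0 := fun h => hB (by linear_combination h)); (try have _ : (q1*q2+T)*p1 + q2*a0 ≠ 0 := fun h => hB (by linear_combination h)); field_simp; first | done | ring1)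
  rw [e2] at h3 h4 h5 h6 ⊢
  have hB : p1*(q1*q2+T) + a0*q2 ≠ 0 := by
    have h3' : (q1*(p1*(q1*q2+T) - a2*q2) + (a0+a2)*(q1*q2+T))/(p1*(q1*q2+T) - a2*q2) * q2 + T ≠ 0 := h3
    intro h
    apply h3'
    rw [div_mul_eq_mul_div, div_add' _ _ _ hA, div_eq_zero_iff]
    left
    linear_combination (q1*q2 + T) * h
  -- step 3
  have e3 : s2 T ((q1*(p1*(q1*q2+T) - a2*q2) + (a0+a2)*(q1*q2+T))/(p1*(q1*q2+T) - a2*q2),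
          (p1*(q1*q2+T) - a2*q2)/(q1*q2+T), q2, (p2*(q1*q2+T) - a2*q1)/(q1*q2+T),
          -(a0+a2), a1+a2, a0, a3+2*a2)
      = ((q1*(p1*(q1*q2+T) - a2*q2) + (a0+a2)*(q1*q2+T))/(p1*(q1*q2+T) - a2*q2),
          (p1*(q1*q2+T) - a2*q2)*p1/(p1*(q1*q2+T) + a0*q2), q2,
          (p1*p2*(q1*q2+T) + a0*p2*q2 - (a0+a2)*(p1*q1+a0))/(p1*(q1*q2+T) + a0*q2),
          -a2, a0+a1+a2, -a0, a3+2*a2+2*a0) := by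
    have hden : (q1*(p1*(q1*q2+T) - a2*q2) + (a0+a2)*(q1*q2+T))/(p1*(q1*q2+T) - a2*q2) * q2 + T
        = (q1*q2+T)*(p1*(q1*q2+T) + a0*q2)/(p1*(q1*q2+T) - a2*q2) := by
      rw [div_mul_eq_mul_div, div_add' _ _ _ hA]; ring
    simp only [s2, div_div_eq_mul_div, Prod.mk.injEq, hden]
    and_intros <;> first | rfl | ring1 | (field_simp [hD, hA, hB]; first | done | ring1) | trivial | (have _ : q2*q1+T ≠ 0 := fun h => hD (by linear_combination h); (try have _ : (q1*q2+T)*p1 - a2*q2 ≠ 0 := fun h => hA (by linear_combination h)); (try have _ : (q1*q2+T)*p1 - q2*a2 ≠ 0 := fun h => hA (by linear_combination h)); (try have _ : p1*(q1*q2+T) - q2*a2 ≠ 0 := fun h => hA (by linear_combination h)); (try have _ : p1*(q2*q1+T) - a2*q2 ≠ 0 := fun h => hA (by linear_combination h)); (try have _ : p1*(q1*q2+T) + q2*a0 ≠ 0 := fun h => hB (by linear_combination h)); (try have _ : (q1*q2+T)*p1 + q2*a0 ≠ 0 := fun h => hB (by linear_combination h)); field_simp; first | done | ring1)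
  rw [e3] at h4 h5 h6 ⊢
  have hp1 : p1 ≠ 0 := by
    intro h
    exact h4 (by simp only [okS0, h, mul_zero, zero_div])
  -- step 4
  have e4 : s0 ((q1*(p1*(q1*q2+T) - a2*q2) + (a0+a2)*(q1*q2+T))/(p1*(q1*q2+T) - a2*q2),
          (p1*(q1*q2+T) - a2*q2)*p1/(p1*(q1*q2+T) + a0*q2), q2,
          (p1*p2*(q1*q2+T) + a0*p2*q2 - (a0+a2)*(p1*q1+a0))/(p1*(q1*q2+T) + a0*q2),
          -a2, a0+a1+a2, -a0, a3+2*a2+2*a0)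
      = (q1 + a0/p1,
          (p1*(q1*q2+T) - a2*q2)*p1/(p1*(q1*q2+T) + a0*q2), q2,
          (p1*p2*(q1*q2+T) + a0*p2*q2 - (a0+a2)*(p1*q1+a0))/(p1*(q1*q2+T) + a0*q2),
          a2, a0+a1+a2, -a0 + -a2, a3+2*a2+2*a0) := by
    simp only [s0, div_div_eq_mul_div, Prod.mk.injEq]
    and_intros <;> first | rfl | ring1 | (field_simp [hD, hA, hB, hp1]; first | done | ring1) | trivial | (have _ : q2*q1+T ≠ 0 := fun h => hD (by linear_combination h); (try have _ : (q1*q2+T)*p1 - a2*q2 ≠ 0 := fun h => hA (by linear_combination h)); (try have _ : (q1*q2+T)*p1 - q2*a2 ≠ 0 := fun h => hA (by linear_combination h)); (try have _ : p1*(q1*q2+T) - q2*a2 ≠ 0 := fun h => hA (by linear_combination h)); (try have _ : p1*(q2*q1+T) - a2*q2 ≠ 0 := fun h => hA (by linear_combination h)); (try have _ : p1*(q1*q2+T) + q2*a0 ≠ 0 := fun h => hB (by linear_combination h)); (try have _ : (q1*q2+T)*p1 + q2*a0 ≠ 0 := fun h => hB (by linear_combination h)); field_simp; first | done | ring1)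
  rw [e4] at h5 h6 ⊢
  -- step 5
  have e5 : s2 T (q1 + a0/p1,
          (p1*(q1*q2+T) - a2*q2)*p1/(p1*(q1*q2+T) + a0*q2), q2,
          (p1*p2*(q1*q2+T) + a0*p2*q2 - (a0+a2)*(p1*q1+a0))/(p1*(q1*q2+T) + a0*q2),
          a2, a0+a1+a2, -a0 + -a2, a3+2*a2+2*a0)
      = (q1 + a0/p1, p1, q2, p2, -a0, a1, a0+a2, a3) := by
    have hden : (q1 + a0/p1) * q2 + T = (p1*(q1*q2+T) + a0*q2)/p1 := by
      field_simp; ring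
    simp only [s2, div_div_eq_mul_div, Prod.mk.injEq, hden]
    and_intros <;> first | rfl | ring1 | (field_simp [hD, hA, hB, hp1]; first | done | ring1) | trivial | (have _ : q2*q1+T ≠ 0 := fun h => hD (by linear_combination h); (try have _ : (q1*q2+T)*p1 - a2*q2 ≠ 0 := fun h => hA (by linear_combination h)); (try have _ : (q1*q2+T)*p1 - q2*a2 ≠ 0 := fun h => hA (by linear_combination h)); (try have _ : p1*(q1*q2+T) - q2*a2 ≠ 0 := fun h => hA (by linear_combination h)); (try have _ : p1*(q2*q1+T) - a2*q2 ≠ 0 := fun h => hA (by linear_combination h)); (try have _ : p1*(q1*q2+T) + q2*a0 ≠ 0 := fun h => hB (by linear_combination h)); (try have _ : (q1*q2+T)*p1 + q2*a0 ≠ 0 := fun h => hB (by linear_combination h)); field_simp; first | done | ring1)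
  rw [e5] at h6 ⊢
  -- step 6
  simp only [s0, div_div_eq_mul_div, Prod.mk.injEq]
  and_intros <;> first | rfl | ring1 | (field_simp; first | done | ring1) | trivial | (have _ : q2*q1+T ≠ 0 := fun h => hD (by linear_combination h); (try have _ : (q1*q2+T)*p1 - a2*q2 ≠ 0 := fun h => hA (by linear_combination h)); (try have _ : (q1*q2+T)*p1 - q2*a2 ≠ 0 := fun h => hA (by linear_combination h)); (try have _ : p1*(q1*q2+T) - q2*a2 ≠ 0 := fun h => hA (by linear_combination h)); (try have _ : p1*(q2*q1+T) - a2*q2 ≠ 0 := fun h => hA (by linear_combination h)); (try have _ : p1*(q1*q2+T) + q2*a0 ≠ 0 := fun h => hB (by linear_combination h)); (try have _ : (q1*q2+T)*p1 + q2*a0 ≠ 0 := fun h => hB (by linear_combination h)); field_simp; first | done | ring1)
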